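/- arXiv:1003.3183 — 6 statements merged into one kernel-verified Lean document; each statement's English description precedes it below -/
import Mathlib

section
/- With c_{ij} = p_i q_j - p_j q_i for complex numbers p₁,...,p₄, q₁,...,q₄, one has the inequality 2|Re(c₃₄ · conj(c₁₂))| ≤ |c₂₃|² + |c₁₄|² + |c₁₃|² + |c₂₄|². -/
theorem re_product_bound (p₁ p₂ p₃ p₄ q₁ q₂ q₃ q₄ : ℂ) :
    2 * |((p₃ * q₄ - p₄ * q₃) * (starRingEnd ℂ) (p₁ * q₂ - p₂ * q₁)).re| ≤
      ‖p₂ * q₃ - p₃ * q₂‖ ^ 2 + ‖p₁ * q₄ - p₄ * q₁‖ ^ 2 +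
      ‖p₁ * q₃ - p₃ * q₁‖ ^ 2 + ‖p₂ * q₄ - p₄ * q₂‖ ^ 2 := by
  set c12 := p₁ * q₂ - p₂ * q₁
  set c13 := p₁ * q₃ - p₃ * q₁
  set c14 := p₁ * q₄ - p₄ * q₁
  set c23 := p₂ * q₃ - p₃ * q₂
  set c24 := p₂ * q₄ - p₄ * q₂
  set c34 := p₃ * q₄ - p₄ * q₃
  have key : c34 * c12 = c13 * c24 - c14 * c23 := by
    simp only [c12, c13, c14, c23, c24, c34]; ring
  have h1 : |(c34 * (starRingEnd ℂ) c12).re| ≤ ‖c34 * c12‖ := by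
    calc |(c34 * (starRingEnd ℂ) c12).re| ≤ ‖c34 * (starRingEnd ℂ) c12‖ :=
          Complex.abs_re_le_norm _
      _ = ‖c34 * c12‖ := by
          rw [norm_mul, norm_mul, Complex.norm_conj]
  have h2 : ‖c34 * c12‖ ≤
      ‖c13‖ * ‖c24‖ + ‖c14‖ * ‖c23‖ := by
    rw [key]
    calc ‖c13 * c24 - c14 * c23‖
        ≤ ‖c13 * c24‖ + ‖c14 * c23‖ := norm_sub_le _ _
      _ = ‖c13‖ * ‖c24‖ + ‖c14‖ * ‖c23‖ := by
          rw [norm_mul, norm_mul]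
  have amgm : ∀ a b : ℝ, 2 * (a * b) ≤ a ^ 2 + b ^ 2 := by
    intro a b; nlinarith [sq_nonneg (a - b)]
  have h3 := amgm (‖c13‖) (‖c24‖)
  have h4 := amgm (‖c14‖) (‖c23‖)
  nlinarith [h1, h2, h3, h4]
end

section
/- With c_{ij} = p_i q_j - p_j q_i for complex numbers p₁,...,p₄, q₁,...,q₄, and for any real t with |t| ≤ 1, one has 4(|c₂₄|² + |c₂₃|² + |c₁₄|² + |c₁₃|²) + t·(−2|c₂₄|² − 2|c₁₃|² + 4Re(c₃₄·conj(c₁₂)) − 4Re(c₂₃·conj(c₁₄))) ≥ 0. -/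
theorem mu_t_weakly_positive (p₁ p₂ p₃ p₄ q₁ q₂ q₃ q₄ : ℂ) (t : ℝ) (ht : |t| ≤ 1) :
    4 * (‖p₂ * q₄ - p₄ * q₂‖ ^ 2 + ‖p₂ * q₃ - p₃ * q₂‖ ^ 2 +
          ‖p₁ * q₄ - p₄ * q₁‖ ^ 2 + ‖p₁ * q₃ - p₃ * q₁‖ ^ 2) +
      t * (-2 * ‖p₂ * q₄ - p₄ * q₂‖ ^ 2 - 2 * ‖p₁ * q₃ - p₃ * q₁‖ ^ 2 +
        4 * ((p₃ * q₄ - p₄ * q₃) * (starRingEnd ℂ) (p₁ * q₂ - p₂ * q₁)).re -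
        4 * ((p₂ * q₃ - p₃ * q₂) * (starRingEnd ℂ) (p₁ * q₄ - p₄ * q₁)).re) ≥ 0 := by
  set c12 := p₁ * q₂ - p₂ * q₁ with hc12
  set c13 := p₁ * q₃ - p₃ * q₁ with hc13
  set c14 := p₁ * q₄ - p₄ * q₁ with hc14
  set c23 := p₂ * q₃ - p₃ * q₂ with hc23
  set c24 := p₂ * q₄ - p₄ * q₂ with hc24
  set c34 := p₃ * q₄ - p₄ * q₃ with hc34
  have plucker : c12 * c34 = c13 * c24 - c14 * c23 := by
    simp only [hc12, hc13, hc14, hc23, hc24, hc34]; ring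
  -- bound on |Re(c34 * conj c12)|
  have habs1 : ‖(c34 * (starRingEnd ℂ) c12)‖ ≤
      ‖c13‖ * ‖c24‖ + ‖c14‖ * ‖c23‖ := by
    rw [norm_mul, Complex.norm_conj, mul_comm]
    calc ‖c12‖ * ‖c34‖ = ‖(c12 * c34)‖ := (norm_mul _ _).symm
      _ = ‖(c13 * c24 - c14 * c23)‖ := by rw [plucker]
      _ ≤ ‖(c13 * c24)‖ + ‖(c14 * c23)‖ := by
          simpa using norm_sub_le (c13 * c24) (c14 * c23)
      _ = ‖c13‖ * ‖c24‖ + ‖c14‖ * ‖c23‖ := by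
          rw [norm_mul, norm_mul]
  have habs2 : ‖(c23 * (starRingEnd ℂ) c14)‖ =
      ‖c14‖ * ‖c23‖ := by
    rw [norm_mul, Complex.norm_conj, mul_comm]
  have hre1 : |(c34 * (starRingEnd ℂ) c12).re| ≤
      ‖c13‖ * ‖c24‖ + ‖c14‖ * ‖c23‖ :=
    le_trans (Complex.abs_re_le_norm _) habs1
  have hre2 : |(c23 * (starRingEnd ℂ) c14).re| ≤ ‖c14‖ * ‖c23‖ :=
    habs2 ▸ Complex.abs_re_le_norm _
  -- AM-GM bounds
  have hamgm1 : 2 * (‖c13‖ * ‖c24‖) ≤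
      ‖c13‖ ^ 2 + ‖c24‖ ^ 2 := by nlinarith [sq_nonneg (‖c13‖ - ‖c24‖)]
  have hamgm2 : 2 * (‖c14‖ * ‖c23‖) ≤
      ‖c14‖ ^ 2 + ‖c23‖ ^ 2 := by nlinarith [sq_nonneg (‖c14‖ - ‖c23‖)]
  have ht1 : -1 ≤ t := neg_le_of_abs_le ht
  have ht2 : t ≤ 1 := le_of_abs_le ht
  have h1 := abs_le.mp hre1
  have h2 := abs_le.mp hre2
  set A := ‖c24‖ ^ 2
  set B := ‖c23‖ ^ 2
  set C := ‖c14‖ ^ 2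
  set D := ‖c13‖ ^ 2
  set R1 := (c34 * (starRingEnd ℂ) c12).re
  set R2 := (c23 * (starRingEnd ℂ) c14).re
  have hA : 0 ≤ A := sq_nonneg _
  have hB : 0 ≤ B := sq_nonneg _
  have hC : 0 ≤ C := sq_nonneg _
  have hD : 0 ≤ D := sq_nonneg _
  have hS1 : -2 * A - 2 * D + 4 * R1 - 4 * R2 ≤ 4 * (A + B + C + D) := by
    linarith [h1.2, h2.1, hamgm1, hamgm2]
  have hS2 : -(4 * (A + B + C + D)) ≤ -2 * A - 2 * D + 4 * R1 - 4 * R2 := by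
    linarith [h1.1, h2.2, hamgm1, hamgm2]
  nlinarith [mul_le_mul_of_nonneg_left hS1 (by linarith : (0:ℝ) ≤ 1 - t),
    mul_le_mul_of_nonneg_left hS2 (by linarith : (0:ℝ) ≤ 1 + t), hA, hB, hC, hD]
end

section
/- With c_{ij} = p_i q_j − p_j q_i for complex numbers p₁,...,p₄, q₁,...,q₄, one has 4|c₃₄|² + 4|c₁₂|² + 2|c₂₄|² + 2|c₁₃|² − 4Re(c₃₄·conj(c₁₂)) + 4Re(c₂₃·conj(c₁₄)) ≥ 0. -/
theorem class_weakly_positive (p₁ p₂ p₃ p₄ q₁ q₂ q₃ q₄ : ℂ) :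
    4 * ‖p₃ * q₄ - p₄ * q₃‖ ^ 2 + 4 * ‖p₁ * q₂ - p₂ * q₁‖ ^ 2 +
      2 * ‖p₂ * q₄ - p₄ * q₂‖ ^ 2 + 2 * ‖p₁ * q₃ - p₃ * q₁‖ ^ 2 -
      4 * ((p₃ * q₄ - p₄ * q₃) * (starRingEnd ℂ) (p₁ * q₂ - p₂ * q₁)).re +
      4 * ((p₂ * q₃ - p₃ * q₂) * (starRingEnd ℂ) (p₁ * q₄ - p₄ * q₁)).re ≥ 0 := by
  set a := p₃ * q₄ - p₄ * q₃ with ha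
  set b := p₁ * q₂ - p₂ * q₁ with hb
  set c := p₂ * q₄ - p₄ * q₂ with hc
  set d := p₁ * q₃ - p₃ * q₁ with hd
  set e := p₂ * q₃ - p₃ * q₂ with he
  set f := p₁ * q₄ - p₄ * q₁ with hf
  have h1 : (a * (starRingEnd ℂ) b).re ≤ ‖a‖ * ‖b‖ := by
    calc (a * (starRingEnd ℂ) b).re ≤ ‖a * (starRingEnd ℂ) b‖ :=
          Complex.re_le_norm _
      _ = ‖a‖ * ‖b‖ := by rw [norm_mul, Complex.norm_conj]
  have h2 : -(‖e‖ * ‖f‖) ≤ (e * (starRingEnd ℂ) f).re := by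
    have := Complex.abs_re_le_norm (e * (starRingEnd ℂ) f)
    rw [norm_mul, Complex.norm_conj] at this
    have := abs_le.mp this
    linarith [this.1]
  have hef : e * f = d * c - a * b := by rw [ha, hb, hc, hd, he, hf]; ring
  have h3 : ‖e‖ * ‖f‖ ≤
      ‖d‖ * ‖c‖ + ‖a‖ * ‖b‖ := by
    rw [← norm_mul, hef, ← norm_mul, ← norm_mul]
    exact (norm_sub_le _ _)
  nlinarith [sq_nonneg (‖a‖ - ‖b‖),
    sq_nonneg (‖c‖ - ‖d‖), norm_nonneg a, norm_nonneg b,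
    norm_nonneg c, norm_nonneg d, norm_nonneg e, norm_nonneg f]
end

section
/- Let H be the real symmetric 4×4 matrix [[2a₁, a₄, −a₄, 2a₆], [a₄, a₂, −2a₆, a₅], [−a₄, −2a₆, a₂, −a₅], [2a₆, a₅, −a₅, 2a₃]]. Then H is positive semidefinite if and only if a₂ − 2a₆ ≥ 0 and the 3×3 symmetric matrix [[a₁, a₄, a₆], [a₄, a₂ + 2a₆, a₅], [a₆, a₅, a₃]] is positive semidefinite. -/
theorem posSemidef_4x4_iff (a₁ a₂ a₃ a₄ a₅ a₆ : ℝ) :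
    (!![2*a₁, a₄, -a₄, 2*a₆;
        a₄, a₂, -2*a₆, a₅;
        -a₄, -2*a₆, a₂, -a₅;
        2*a₆, a₅, -a₅, 2*a₃] : Matrix (Fin 4) (Fin 4) ℝ).PosSemidef ↔
      (a₂ - 2*a₆ ≥ 0 ∧
        (!![a₁, a₄, a₆;
            a₄, a₂ + 2*a₆, a₅;
            a₆, a₅, a₃] : Matrix (Fin 3) (Fin 3) ℝ).PosSemidef) := by
  simp only [Matrix.posSemidef_iff_dotProduct_mulVec]
  constructor
  · rintro ⟨hH, hQ⟩
    refine ⟨?_, ?_, ?_⟩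
    · have h := hQ ![0,1,1,0]
      simp [Matrix.mulVec, dotProduct, Fin.sum_univ_four, Fin.sum_univ_three] at h
      linarith
    · ext i j
      fin_cases i <;> fin_cases j <;>
        simp [Matrix.conjTranspose_apply]
    · intro v
      have h := hQ ![v 0, v 1, -(v 1), v 2]
      simp [Matrix.mulVec, dotProduct, Fin.sum_univ_four, Fin.sum_univ_three] at h ⊢
      nlinarith [h]
  · rintro ⟨h1, hK, hKq⟩
    constructor
    · ext i j
      fin_cases i <;> fin_cases j <;>
        simp [Matrix.conjTranspose_apply]
    · intro v
      have h2 := hKq ![v 0, (v 1 - v 2)/2, v 3]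
      have h3 : 0 ≤ (a₂ - 2*a₆)/2 * (v 1 + v 2)^2 := by positivity
      simp [Matrix.mulVec, dotProduct, Fin.sum_univ_four, Fin.sum_univ_three] at h2 ⊢
      nlinarith [h2, h3]
end

section
/- Let C ⊂ ℝ⁶ be the closed convex cone generated by the vector (0,0,1,0,0,0) together with all vectors (1, a²+b², a²b², a+b, ab(a+b), ab) for a, b ∈ ℝ. Then C contains every vector (x₁,...,x₆) ∈ ℝ⁶ satisfying x₂ ≥ 2|x₆| and such that the symmetric matrix [[x₁, x₄, x₆], [x₄, x₂+2x₆, x₅], [x₆, x₅, x₃]] is positive semidefinite. -/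
set_option maxHeartbeats 2000000

/-- The generating set of the cone `C`: the vector `(0,0,1,0,0,0)` together with the
vectors `(1, a²+b², a²b², a+b, ab(a+b), ab)` for `a, b ∈ ℝ`. -/
def coneGens : Set (Fin 6 → ℝ) :=
  {v | v = ![0, 0, 1, 0, 0, 0] ∨
    ∃ a b : ℝ, v = ![1, a^2 + b^2, a^2 * b^2, a + b, a * b * (a + b), a * b]}

/-- The set of finite nonnegative combinations of generators. -/
def coneS : Set (Fin 6 → ℝ) :=
  {v | ∃ (n : ℕ) (c : Fin n → ℝ) (w : Fin n → Fin 6 → ℝ),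
    (∀ i, 0 ≤ c i) ∧ (∀ i, w i ∈ coneGens) ∧ v = ∑ i, c i • w i}

/-- The closed convex cone generated by `coneGens`: the closure of the set of finite
nonnegative linear combinations of generators. -/
def coneC : Set (Fin 6 → ℝ) :=
  closure {v | ∃ (n : ℕ) (c : Fin n → ℝ) (w : Fin n → Fin 6 → ℝ),
    (∀ i, 0 ≤ c i) ∧ (∀ i, w i ∈ coneGens) ∧ v = ∑ i, c i • w i}

lemma gen_mem (a b : ℝ) :
    (![1, a^2 + b^2, a^2 * b^2, a + b, a * b * (a + b), a * b] : Fin 6 → ℝ) ∈ coneGens :=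
  Or.inr ⟨a, b, rfl⟩

lemma zero_mem_coneS : (0 : Fin 6 → ℝ) ∈ coneS := by
  refine ⟨0, ![], ![], ?_, ?_, by simp⟩ <;> exact fun i => i.elim0

lemma add_gen_mem_coneS {y : Fin 6 → ℝ} (hy : y ∈ coneS) {c : ℝ} (hc : 0 ≤ c)
    {w : Fin 6 → ℝ} (hw : w ∈ coneGens) : y + c • w ∈ coneS := by
  obtain ⟨n, cs, ws, h1, h2, h3⟩ := hy
  refine ⟨n+1, Fin.cons c cs, Fin.cons w ws, ?_, ?_, ?_⟩
  · intro i; induction i using Fin.cases <;> simp [hc, h1]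
  · intro i; induction i using Fin.cases <;> simp [hw, h2]
  · rw [Fin.sum_univ_succ]
    simp only [Fin.cons_zero, Fin.cons_succ]
    rw [← h3]; abel

open Filter Real Topology

lemma junk_limit (x y : Fin 6 → ℝ) (hy : y ∈ coneS) (n11 n12 n22 : ℝ)
    (h11 : 0 < n11) (hdet : n12^2 ≤ n11 * n22)
    (e0 : x 0 = y 0) (e1 : x 1 = y 1 + n11) (e2 : x 2 = y 2 + n22)
    (e3 : x 3 = y 3) (e4 : x 4 = y 4 + n12) (e5 : x 5 = y 5) :
    x ∈ closure coneS := by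
  have h11' : n11 ≠ 0 := ne_of_gt h11
  have hc2 : 0 ≤ n22 - n12^2/n11 := by
    rw [sub_nonneg, div_le_iff₀ h11]; linarith [hdet]
  set R : ℕ → ℝ := fun k => ((k : ℝ) + 1) + 4*|n12|/n11 with hR
  have habs : 0 ≤ 4*|n12|/n11 := by positivity
  have hRpos : ∀ k, 0 < R k := by
    intro k
    have : (0:ℝ) < (k:ℝ) + 1 := by positivity
    simp only [hR]; linarith
  have hRk : ∀ k, R k ≠ 0 := fun k => ne_of_gt (hRpos k)
  have hRbig : ∀ k, 4*(n12/n11) ≤ R k := by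
    intro k
    have h2 : 4*(n12/n11) ≤ 4*(|n12|/n11) := by
      gcongr
      exact le_abs_self n12
    have : (0:ℝ) < (k:ℝ) + 1 := by positivity
    simp only [hR]
    rw [mul_div_assoc]
    linarith
  have harg : ∀ k, 0 ≤ (R k)^2 - 4*(R k)*(n12/n11) := by
    intro k
    have h1 := mul_nonneg (hRpos k).le (sub_nonneg.mpr (hRbig k))
    nlinarith [h1]
  set d : ℕ → ℝ := fun k => Real.sqrt ((R k)^2 - 4*(R k)*(n12/n11)) with hd
  have hd2 : ∀ k, (d k)^2 = (R k)^2 - 4*(R k)*(n12/n11) := fun k => Real.sq_sqrt (harg k)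
  set a : ℕ → ℝ := fun k => (R k + d k)/2 with ha
  set b : ℕ → ℝ := fun k => (R k - d k)/2 with hb
  have hab : ∀ k, a k + b k = R k := fun k => by simp only [ha, hb]; ring
  have hprod : ∀ k, a k * b k = (R k)*(n12/n11) := by
    intro k
    have h := hd2 k
    simp only [ha, hb]
    linear_combination (-1/4 : ℝ) * h
  set u : ℕ → Fin 6 → ℝ := fun k =>
    (0 : Fin 6 → ℝ) + y + (n22 - n12^2/n11) • (![0, 0, 1, 0, 0, 0] : Fin 6 → ℝ)
      + (n11/(R k)^2) • (![1, (a k)^2 + (b k)^2, (a k)^2 * (b k)^2, a k + b k,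
          (a k) * (b k) * (a k + b k), (a k) * (b k)] : Fin 6 → ℝ) with hu
  have humem : ∀ k, u k ∈ coneS := by
    intro k
    have h1 : (0 : Fin 6 → ℝ) + y ∈ coneS := by simpa using hy
    have h2 := add_gen_mem_coneS h1 hc2
      (Or.inl rfl : (![0, 0, 1, 0, 0, 0] : Fin 6 → ℝ) ∈ coneGens)
    have h3 : (0:ℝ) ≤ n11/(R k)^2 := by positivity
    exact add_gen_mem_coneS h2 h3 (Or.inr ⟨a k, b k, rfl⟩)
  have key : ∀ k i, u k i
      = x i + (![0, -2*n12, 0, n11, 0, n12] : Fin 6 → ℝ) i / R k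
          + (![n11, 0, 0, 0, 0, 0] : Fin 6 → ℝ) i / (R k)^2 := by
    intro k i
    have h1 := hab k
    have h2 := hprod k
    have hk := hRk k
    fin_cases i
    · show (0:ℝ) + y 0 + (n22 - n12^2/n11) * 0 + n11/(R k)^2 * 1
        = x 0 + 0 / R k + n11 / (R k)^2
      rw [e0]; ring
    · show (0:ℝ) + y 1 + (n22 - n12^2/n11) * 0 + n11/(R k)^2 * ((a k)^2 + (b k)^2)
        = x 1 + (-2*n12) / R k + 0 / (R k)^2
      have e : (a k)^2 + (b k)^2 = (R k)^2 - 2*((R k)*(n12/n11)) := by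
        linear_combination (a k + b k + R k) * h1 - 2 * h2
      rw [e1, e]
      field_simp
      ring
    · show (0:ℝ) + y 2 + (n22 - n12^2/n11) * 1 + n11/(R k)^2 * ((a k)^2 * (b k)^2)
        = x 2 + 0 / R k + 0 / (R k)^2
      have e : (a k)^2 * (b k)^2 = (R k)^2 * (n12/n11)^2 := by
        linear_combination (a k * b k + (R k)*(n12/n11)) * h2
      rw [e2, e]
      field_simp
      ring
    · show (0:ℝ) + y 3 + (n22 - n12^2/n11) * 0 + n11/(R k)^2 * (a k + b k)
        = x 3 + n11 / R k + 0 / (R k)^2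
      rw [e3, h1]
      field_simp
      ring
    · show (0:ℝ) + y 4 + (n22 - n12^2/n11) * 0 + n11/(R k)^2 * ((a k) * (b k) * (a k + b k))
        = x 4 + 0 / R k + 0 / (R k)^2
      rw [e4, h2, h1]
      field_simp
      ring
    · show (0:ℝ) + y 5 + (n22 - n12^2/n11) * 0 + n11/(R k)^2 * ((a k) * (b k))
        = x 5 + n12 / R k + 0 / (R k)^2
      rw [e5, h2]
      field_simp
      ring
  have hRtop : Tendsto R atTop atTop := by
    apply tendsto_atTop_add_const_right
    exact tendsto_atTop_add_const_right _ 1 tendsto_natCast_atTop_atTop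
  have hR2top : Tendsto (fun k => (R k)^2) atTop atTop := by
    simpa [pow_two] using hRtop.atTop_mul_atTop₀ hRtop
  have hlim : Tendsto u atTop (𝓝 x) := by
    rw [tendsto_pi_nhds]
    intro i
    simp only [key]
    have t1 : Tendsto (fun k => (![0, -2*n12, 0, n11, 0, n12] : Fin 6 → ℝ) i / R k)
        atTop (𝓝 0) := Tendsto.div_atTop tendsto_const_nhds hRtop
    have t2 : Tendsto (fun k => (![n11, 0, 0, 0, 0, 0] : Fin 6 → ℝ) i / (R k)^2)
        atTop (𝓝 0) := Tendsto.div_atTop tendsto_const_nhds hR2top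
    simpa using (tendsto_const_nhds.add t1).add t2
  exact mem_closure_of_tendsto hlim (Eventually.of_forall humem)

lemma two_atom (m0 m1 m2 m3 : ℝ) (hm0 : 0 < m0) (hD : 0 < m0*m2 - m1^2) :
    ∃ t1 t2 a1 a2 : ℝ, 0 ≤ t1 ∧ 0 ≤ t2 ∧
      t1 + t2 = m0 ∧ t1*a1 + t2*a2 = m1 ∧ t1*a1^2 + t2*a2^2 = m2 ∧
      t1*a1^3 + t2*a2^3 = m3 ∧
      t1*a1^4 + t2*a2^4
        = ((m0*m3 - m1*m2)*m3 + (m2^2 - m1*m3)*m2)/(m0*m2 - m1^2) := by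
  set D : ℝ := m0*m2 - m1^2 with hDdef
  have hD' : D ≠ 0 := ne_of_gt hD
  set al : ℝ := (m0*m3 - m1*m2)/D with hal
  set be : ℝ := (m2^2 - m1*m3)/D with hbe
  set disc : ℝ := al^2 + 4*be with hdisc
  have hdiscpos : 0 < disc := by
    have hiden : disc * (m0^2*D^2) = (m0^2*m3 - 3*m0*m1*m2 + 2*m1^3)^2 + 4*D^3 := by
      simp only [hdisc, hal, hbe, hDdef]
      field_simp [show m0*m2 - m1^2 ≠ 0 from hD']
      ring
    nlinarith [sq_nonneg (m0^2*m3 - 3*m0*m1*m2 + 2*m1^3), pow_pos hD 3, sq_nonneg (m0*D),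
      mul_pos (mul_pos hm0 hm0) (mul_pos hD hD)]
  set r : ℝ := Real.sqrt disc with hrdef
  have hr2 : r^2 = disc := Real.sq_sqrt hdiscpos.le
  have hrpos : 0 < r := Real.sqrt_pos.mpr hdiscpos
  have hr' : r ≠ 0 := ne_of_gt hrpos
  set a1 : ℝ := (al + r)/2 with ha1
  set a2 : ℝ := (al - r)/2 with ha2
  set t1 : ℝ := (m1 - m0*a2)/r with ht1
  set t2 : ℝ := (m0*a1 - m1)/r with ht2
  -- key inequality for nonneg weights : (m0*al - 2*m1)^2 = m0^2*disc - 4*D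
  have hI5 : (m0*al - 2*m1)^2 = m0^2*disc - 4*D := by
    simp only [hdisc, hal, hbe, hDdef]
    field_simp [show m0*m2 - m1^2 ≠ 0 from hD']
    ring
  have habs : |m0*al - 2*m1| ≤ m0*r := by
    rw [abs_le]
    constructor <;> nlinarith [hI5, hr2, hD, mul_pos hm0 hrpos, sq_nonneg (m0*r - (m0*al - 2*m1)), sq_nonneg (m0*r + (m0*al - 2*m1))]
  have ht1n : 0 ≤ t1 := by
    rw [ht1, ha2]
    have h := (abs_le.mp habs).1
    apply div_nonneg _ hrpos.le
    nlinarith [h]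
  have ht2n : 0 ≤ t2 := by
    rw [ht2, ha1]
    have h := (abs_le.mp habs).2
    apply div_nonneg _ hrpos.le
    nlinarith [h]
  -- root property
  have hq1 : a1^2 = al*a1 + be := by
    rw [ha1]; linear_combination (1/4 : ℝ) * hr2
  have hq2 : a2^2 = al*a2 + be := by
    rw [ha2]; linear_combination (1/4 : ℝ) * hr2
  have hsub : a1 - a2 = r := by rw [ha1, ha2]; ring
  have hs0 : t1 + t2 = m0 := by
    rw [ht1, ht2, ← add_div,
      show m1 - m0*a2 + (m0*a1 - m1) = m0*(a1 - a2) by ring, hsub,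
      mul_div_assoc, div_self hr', mul_one]
  have hs1 : t1*a1 + t2*a2 = m1 := by
    rw [ht1, ht2, div_mul_eq_mul_div, div_mul_eq_mul_div, ← add_div,
      show (m1 - m0*a2)*a1 + (m0*a1 - m1)*a2 = m1*(a1 - a2) by ring, hsub,
      mul_div_assoc, div_self hr', mul_one]
  have halm : al*m1 + be*m0 = m2 := by
    rw [hal, hbe]
    field_simp [hDdef]
    ring
  have hs2 : t1*a1^2 + t2*a2^2 = m2 := by
    calc t1*a1^2 + t2*a2^2 = al*(t1*a1 + t2*a2) + be*(t1 + t2) := by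
          linear_combination t1 * hq1 + t2 * hq2
      _ = m2 := by rw [hs1, hs0]; exact halm
  have halm2 : al*m2 + be*m1 = m3 := by
    rw [hal, hbe]
    field_simp [hDdef]
    ring
  have hs3 : t1*a1^3 + t2*a2^3 = m3 := by
    calc t1*a1^3 + t2*a2^3 = al*(t1*a1^2 + t2*a2^2) + be*(t1*a1 + t2*a2) := by
          linear_combination (t1*a1) * hq1 + (t2*a2) * hq2
      _ = m3 := by rw [hs2, hs1]; exact halm2
  have hs4 : t1*a1^4 + t2*a2^4 = ((m0*m3 - m1*m2)*m3 + (m2^2 - m1*m3)*m2)/D := by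
    have : t1*a1^4 + t2*a2^4 = al*(t1*a1^3 + t2*a2^3) + be*(t1*a1^2 + t2*a2^2) := by
      linear_combination (t1*a1^2) * hq1 + (t2*a2^2) * hq2
    rw [this, hs3, hs2, hal, hbe]
    field_simp
  exact ⟨t1, t2, a1, a2, ht1n, ht2n, hs0, hs1, hs2, hs3, hs4⟩

lemma core (x : Fin 6 → ℝ)
    (hq : ∀ v0 v1 v2 : ℝ, 0 ≤ x 0*v0^2 + (x 1 + 2*x 5)*v1^2 + x 2*v2^2
      + 2*x 3*v0*v1 + 2*x 5*v0*v2 + 2*x 4*v1*v2)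
    (hm : 0 < x 0) (hL : 0 < x 0*(x 1 + 2*x 5) - x 3^2) (hgap : 2*x 5 < x 1) :
    x ∈ closure coneS := by
  have hm' : x 0 ≠ 0 := ne_of_gt hm
  -- determinant nonneg
  have hdet : 0 ≤ x 0*(x 1 + 2*x 5)*x 2 + 2*x 3*x 4*x 5 - x 5^2*(x 1 + 2*x 5)
      - x 0*x 4^2 - x 3^2*x 2 := by
    have h := hq (x 3*x 4 - x 5*(x 1 + 2*x 5)) (x 3*x 5 - x 0*x 4)
      (x 0*(x 1 + 2*x 5) - x 3^2)
    have e : x 0*(x 3*x 4 - x 5*(x 1 + 2*x 5))^2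
        + (x 1 + 2*x 5)*(x 3*x 5 - x 0*x 4)^2
        + x 2*(x 0*(x 1 + 2*x 5) - x 3^2)^2
        + 2*x 3*(x 3*x 4 - x 5*(x 1 + 2*x 5))*(x 3*x 5 - x 0*x 4)
        + 2*x 5*(x 3*x 4 - x 5*(x 1 + 2*x 5))*(x 0*(x 1 + 2*x 5) - x 3^2)
        + 2*x 4*(x 3*x 5 - x 0*x 4)*(x 0*(x 1 + 2*x 5) - x 3^2)
      = (x 0*(x 1 + 2*x 5)*x 2 + 2*x 3*x 4*x 5 - x 5^2*(x 1 + 2*x 5)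
          - x 0*x 4^2 - x 3^2*x 2) * (x 0*(x 1 + 2*x 5) - x 3^2) := by ring
    rw [e] at h
    by_contra hcon
    push_neg at hcon
    nlinarith [mul_pos (neg_pos.mpr hcon) hL]
  rcases le_or_gt (4*(x 0)*(x 5)) ((x 3)^2) with hc | hc
  · -- CASE 1 : single atom + junk
    set d : ℝ := Real.sqrt ((x 3)^2 - 4*(x 0)*(x 5)) with hd
    have hd2 : d^2 = (x 3)^2 - 4*(x 0)*(x 5) := Real.sq_sqrt (by linarith)
    set A : ℝ := (x 3 + d)/(2*(x 0)) with hA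
    set B : ℝ := (x 3 - d)/(2*(x 0)) with hB
    have hAB : A + B = x 3 / x 0 := by
      rw [hA, hB]; field_simp; ring
    have hABp : A*B = x 5 / x 0 := by
      rw [hA, hB]
      rw [div_mul_div_comm]
      rw [show (x 3 + d)*(x 3 - d) = (x 3)^2 - d^2 by ring, hd2]
      field_simp
      ring
    refine junk_limit x
      ((0 : Fin 6 → ℝ) + (x 0) • (![1, A^2 + B^2, A^2 * B^2, A + B, A * B * (A + B), A * B] : Fin 6 → ℝ))
      (add_gen_mem_coneS zero_mem_coneS hm.le (gen_mem A B))
      (x 1 + 2*x 5 - (x 3)^2/(x 0)) (x 4 - (x 3)*(x 5)/(x 0)) (x 2 - (x 5)^2/(x 0))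
      ?_ ?_ ?_ ?_ ?_ ?_ ?_ ?_
    · -- n11 > 0
      rw [show x 1 + 2*x 5 - (x 3)^2/(x 0) = (x 0*(x 1 + 2*x 5) - x 3^2)/(x 0) by field_simp]
      positivity
    · -- n12^2 ≤ n11 * n22
      have e2 : (x 0) * ((x 1 + 2*x 5 - (x 3)^2/(x 0)) * (x 2 - (x 5)^2/(x 0))
          - (x 4 - (x 3)*(x 5)/(x 0))^2)
        = x 0*(x 1 + 2*x 5)*x 2 + 2*x 3*x 4*x 5 - x 5^2*(x 1 + 2*x 5)
          - x 0*x 4^2 - x 3^2*x 2 := by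
        field_simp
        ring
      nlinarith [e2, hdet, hm]
    · show x 0 = 0 + x 0 * 1
      ring
    · show x 1 = 0 + x 0 * (A^2 + B^2) + (x 1 + 2*x 5 - (x 3)^2/(x 0))
      have hA2 : A^2 + B^2 = (x 3/x 0)^2 - 2*(x 5/x 0) := by
        linear_combination (A + B + x 3/x 0) * hAB - 2 * hABp
      rw [hA2]
      field_simp
      ring
    · show x 2 = 0 + x 0 * (A^2 * B^2) + (x 2 - (x 5)^2/(x 0))
      have hP2 : A^2 * B^2 = (x 5/x 0)^2 := by
        linear_combination (A*B + x 5/x 0) * hABp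
      rw [hP2]
      field_simp
      ring
    · show x 3 = 0 + x 0 * (A + B)
      rw [hAB]
      field_simp
      ring
    · show x 4 = 0 + x 0 * (A * B * (A + B)) + (x 4 - (x 3)*(x 5)/(x 0))
      rw [hABp, hAB]
      field_simp
      ring
    · show x 5 = 0 + x 0 * (A * B)
      rw [hABp]
      field_simp
      ring
  · -- CASE 2 : two parabola atoms + junk
    have hD : 0 < x 0 * x 5 - (x 3/2)^2 := by nlinarith [hc]
    have hD' : x 0 * x 5 - (x 3/2)^2 ≠ 0 := ne_of_gt hD
    have hL' : x 0*(x 1 + 2*x 5) - x 3^2 ≠ 0 := ne_of_gt hL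
    have h11 : 0 < x 1 - 2*x 5 := by linarith
    obtain ⟨n12, hn⟩ : ∃ z : ℝ, z * (x 0*(x 1 + 2*x 5) - x 3^2)
        = (x 1 - 2*x 5)*(x 0*x 4 - x 3*x 5) :=
      ⟨(x 1 - 2*x 5)*(x 0*x 4 - x 3*x 5)/(x 0*(x 1 + 2*x 5) - x 3^2), div_mul_cancel₀ _ hL'⟩
    obtain ⟨m3, h3⟩ : ∃ z : ℝ, 2*z = x 4 - n12 := ⟨(x 4 - n12)/2, by ring⟩
    obtain ⟨m4, h4⟩ : ∃ z : ℝ, z * (x 0*x 5 - (x 3/2)^2)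
        = (x 0*m3 - (x 3/2)*(x 5))*m3 + ((x 5)^2 - (x 3/2)*m3)*(x 5) :=
      ⟨((x 0*m3 - (x 3/2)*(x 5))*m3 + ((x 5)^2 - (x 3/2)*m3)*(x 5))/(x 0*x 5 - (x 3/2)^2),
        div_mul_cancel₀ _ hD'⟩
    obtain ⟨t1, t2, a1, a2, ht1, ht2, hs0, hs1, hs2, hs3, hs4⟩ :=
      two_atom (x 0) (x 3/2) (x 5) m3 hm hD
    have hm4 : t1*a1^4 + t2*a2^4 = m4 := by
      rw [hs4, eq_comm, eq_div_iff hD']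
      linear_combination h4
    have hdet2 : n12^2 ≤ (x 1 - 2*x 5) * (x 2 - m4) := by
      have key : ((x 1 - 2*x 5)*(x 2 - m4) - n12^2)
            * ((x 0*(x 1 + 2*x 5) - x 3^2)^2 * (x 0*x 5 - (x 3/2)^2))
          = (x 1 - 2*x 5) * (x 0*(x 1 + 2*x 5)*x 2 + 2*x 3*x 4*x 5 - x 5^2*(x 1 + 2*x 5)
              - x 0*x 4^2 - x 3^2*x 2)
            * ((x 0*(x 1 + 2*x 5) - x 3^2) * (x 0*x 5 - (x 3/2)^2)) := by
        linear_combination ((2:ℝ)*(x 3)^4*(x 5) + (-1:ℝ)*(x 1)*(x 3)^4 + (-8:ℝ)*(x 0)*(x 3)^2*(x 5)^2 + (2:ℝ)*(x 0)*(x 1)^2*(x 3)^2 + (8:ℝ)*(x 0)^2*(x 5)^3 + (4:ℝ)*(x 0)^2*(x 1)*(x 5)^2 + (-2:ℝ)*(x 0)^2*(x 1)^2*(x 5) + (-1:ℝ)*(x 0)^2*(x 1)^3) * h4 + ((-1:ℝ)*(x 3)^5*(x 5)^2 + ((1:ℝ)/2)*(x 1)*(x 3)^5*(x 5) + (4:ℝ)*(x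 0)*(x 3)^3*(x 5)^3 + (1:ℝ)*(x 0)*(x 3)^4*(x 5)*(m3) + ((-1:ℝ)/2)*(x 0)*(x 3)^4*(x 5)*(n12) + ((1:ℝ)/2)*(x 0)*(x 3)^4*(x 4)*(x 5) + ((-1:ℝ)/2)*(x 0)*(x 1)*(x 3)^4*(m3) + ((1:ℝ)/4)*(x 0)*(x 1)*(x 3)^4*(n12) + ((-1:ℝ)/4)*(x 0)*(x 1)*(x 3)^4*(x 4) + (-1:ℝ)*(x 0)*(x 1)^2*(x 3)^3*(x 5) + (-4:ℝ)*(x 0)^2*(x 3)*(x 5)^4 + (-4:ℝ)*(x 0)^2*(x 3)^2*(x 5)^2*(m3) + (2:ℝ)*(x 0)^2*(x 3)^2*(x 5)^2*(n12) + (-2:ℝ)*(x 0)^2*(x 3)^2*(x 4)*(x 5)^2 + (-2:ℝ)*(x 0)^2*(x 1)*(x 3)*(x 5)^3 + (1:ℝ)*(x 0)^2*(x 1)^2*(x 3)*(x 5)^2 + (1:ℝ)*(x 0)^2*(x 1)^2*(x 3)^2*(m3) + ((-1:ℝ)/2)*(x 0)^2*(x 1)^2*(x 3)^2*(n12) + ((1:ℝ)/2)*(x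 0)^2*(x 1)^2*(x 3)^2*(x 4) + ((1:ℝ)/2)*(x 0)^2*(x 1)^3*(x 3)*(x 5) + (4:ℝ)*(x 0)^3*(x 5)^3*(m3) + (-2:ℝ)*(x 0)^3*(x 5)^3*(n12) + (2:ℝ)*(x 0)^3*(x 4)*(x 5)^3 + (2:ℝ)*(x 0)^3*(x 1)*(x 5)^2*(m3) + (-1:ℝ)*(x 0)^3*(x 1)*(x 5)^2*(n12) + (1:ℝ)*(x 0)^3*(x 1)*(x 4)*(x 5)^2 + (-1:ℝ)*(x 0)^3*(x 1)^2*(x 5)*(m3) + ((1:ℝ)/2)*(x 0)^3*(x 1)^2*(x 5)*(n12) + ((-1:ℝ)/2)*(x 0)^3*(x 1)^2*(x 4)*(x 5) + ((-1:ℝ)/2)*(x 0)^3*(x 1)^3*(m3) + ((1:ℝ)/4)*(x 0)^3*(x 1)^3*(n12) + ((-1:ℝ)/4)*(x 0)^3*(x 1)^3*(x 4)) * h3 + (((-1:ℝ)/2)*(x 3)^3*(x 5)^2 + ((-1:ℝ)/4)*(x 3)^4*(n12) + ((1:ℝ)/4)*(x 1)*(x 3)^3*(x 5) + (1:ℝ)*(x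 0)*(x 3)*(x 5)^3 + (1:ℝ)*(x 0)*(x 3)^2*(x 5)*(n12) + ((1:ℝ)/2)*(x 0)*(x 3)^2*(x 4)*(x 5) + ((1:ℝ)/2)*(x 0)*(x 1)*(x 3)^2*(n12) + ((-1:ℝ)/4)*(x 0)*(x 1)*(x 3)^2*(x 4) + ((-1:ℝ)/4)*(x 0)*(x 1)^2*(x 3)*(x 5) + (-1:ℝ)*(x 0)^2*(x 5)^2*(n12) + (-1:ℝ)*(x 0)^2*(x 4)*(x 5)^2 + (-1:ℝ)*(x 0)^2*(x 1)*(x 5)*(n12) + ((-1:ℝ)/4)*(x 0)^2*(x 1)^2*(n12) + ((1:ℝ)/4)*(x 0)^2*(x 1)^2*(x 4)) * hn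
      have h5 : 0 ≤ (x 1 - 2*x 5) * (x 0*(x 1 + 2*x 5)*x 2 + 2*x 3*x 4*x 5
            - x 5^2*(x 1 + 2*x 5) - x 0*x 4^2 - x 3^2*x 2)
          * ((x 0*(x 1 + 2*x 5) - x 3^2) * (x 0*x 5 - (x 3/2)^2)) :=
        mul_nonneg (mul_nonneg h11.le hdet) (mul_pos hL hD).le
      have h6 : 0 < (x 0*(x 1 + 2*x 5) - x 3^2)^2 * (x 0*x 5 - (x 3/2)^2) :=
        mul_pos (by positivity) hD
      by_contra hcon
      push_neg at hcon
      have h7 : ((x 1 - 2*x 5)*(x 2 - m4) - n12^2)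
          * ((x 0*(x 1 + 2*x 5) - x 3^2)^2 * (x 0*x 5 - (x 3/2)^2)) < 0 :=
        mul_neg_of_neg_of_pos (by linarith) h6
      linarith [key, h5, h7]
    refine junk_limit x
      ((0 : Fin 6 → ℝ)
        + t1 • (![1, a1^2 + a1^2, a1^2 * a1^2, a1 + a1, a1 * a1 * (a1 + a1), a1 * a1] : Fin 6 → ℝ)
        + t2 • (![1, a2^2 + a2^2, a2^2 * a2^2, a2 + a2, a2 * a2 * (a2 + a2), a2 * a2] : Fin 6 → ℝ))
      (add_gen_mem_coneS (add_gen_mem_coneS zero_mem_coneS ht1 (gen_mem a1 a1)) ht2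
        (gen_mem a2 a2))
      (x 1 - 2*x 5) n12 (x 2 - m4) h11 hdet2 ?_ ?_ ?_ ?_ ?_ ?_
    · show x 0 = 0 + t1 * 1 + t2 * 1
      linear_combination - hs0
    · show x 1 = 0 + t1 * (a1^2 + a1^2) + t2 * (a2^2 + a2^2) + (x 1 - 2*x 5)
      linear_combination (-2 : ℝ) * hs2
    · show x 2 = 0 + t1 * (a1^2 * a1^2) + t2 * (a2^2 * a2^2) + (x 2 - m4)
      linear_combination - hm4
    · show x 3 = 0 + t1 * (a1 + a1) + t2 * (a2 + a2)
      linear_combination (-2 : ℝ) * hs1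
    · show x 4 = 0 + t1 * (a1 * a1 * (a1 + a1)) + t2 * (a2 * a2 * (a2 + a2)) + n12
      linear_combination (-2 : ℝ) * hs3 - h3
    · show x 5 = 0 + t1 * (a1 * a1) + t2 * (a2 * a2)
      linear_combination - hs2

theorem semipositive_in_cone (x : Fin 6 → ℝ)
    (h₁ : x 1 ≥ 2 * |x 5|)
    (h₂ : (!![x 0, x 3, x 5;
               x 3, x 1 + 2 * x 5, x 4;
               x 5, x 4, x 2] : Matrix (Fin 3) (Fin 3) ℝ).PosSemidef) :
    x ∈ coneC := by
  have hq0 : ∀ v0 v1 v2 : ℝ, 0 ≤ x 0*v0^2 + (x 1 + 2*x 5)*v1^2 + x 2*v2^2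
      + 2*x 3*v0*v1 + 2*x 5*v0*v2 + 2*x 4*v1*v2 := by
    intro v0 v1 v2
    have h := h₂.dotProduct_mulVec_nonneg ![v0, v1, v2]
    simp [Matrix.mulVec, dotProduct, Fin.sum_univ_three] at h
    nlinarith [h]
  have habs1 : 2*x 5 ≤ x 1 := by
    have := le_abs_self (x 5); linarith
  have habs2 : 0 ≤ x 1 + 2*x 5 := by
    have := neg_abs_le (x 5); linarith
  have hx0 : 0 ≤ x 0 := by have := hq0 1 0 0; nlinarith [this]
  set xs : ℕ → Fin 6 → ℝ := fun k =>
    ![x 0 + 1/((k:ℝ)+1), x 1 + 1/((k:ℝ)+1), x 2 + 1/((k:ℝ)+1), x 3, x 4, x 5] with hxs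
  have hmem : ∀ k, xs k ∈ closure coneS := by
    intro k
    set δ : ℝ := 1/((k:ℝ)+1) with hδdef
    have hδ : 0 < δ := by positivity
    apply core
    · -- quadratic form
      intro v0 v1 v2
      show 0 ≤ (x 0 + δ)*v0^2 + ((x 1 + δ) + 2*x 5)*v1^2 + (x 2 + δ)*v2^2
        + 2*x 3*v0*v1 + 2*x 5*v0*v2 + 2*x 4*v1*v2
      nlinarith [hq0 v0 v1 v2, sq_nonneg v0, sq_nonneg v1, sq_nonneg v2, hδ.le]
    · show 0 < x 0 + δ
      linarith
    · show 0 < (x 0 + δ)*((x 1 + δ) + 2*x 5) - x 3^2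
      have hM : 0 < x 1 + δ + 2*x 5 := by linarith
      have hA := hq0 (x 1 + δ + 2*x 5) (-(x 3)) 0
      nlinarith [hA, hM, hδ, sq_nonneg (x 3), mul_pos hδ hM, mul_nonneg hδ.le (sq_nonneg (x 3))]
    · show 2*x 5 < x 1 + δ
      linarith
  have hlim : Tendsto xs atTop (𝓝 x) := by
    rw [tendsto_pi_nhds]
    intro i
    have hone : Tendsto (fun k : ℕ => 1/((k:ℝ)+1)) atTop (𝓝 0) :=
      tendsto_one_div_add_atTop_nhds_zero_nat
    fin_cases i
    · have h := (tendsto_const_nhds (x := x 0) (f := (atTop : Filter ℕ))).add hone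
      rw [add_zero] at h
      exact h
    · have h := (tendsto_const_nhds (x := x 1) (f := (atTop : Filter ℕ))).add hone
      rw [add_zero] at h
      exact h
    · have h := (tendsto_const_nhds (x := x 2) (f := (atTop : Filter ℕ))).add hone
      rw [add_zero] at h
      exact h
    · exact tendsto_const_nhds
    · exact tendsto_const_nhds
    · exact tendsto_const_nhds
  exact isClosed_closure.mem_of_tendsto hlim (Eventually.of_forall hmem)
end

section
/- For fixed real t ∈ [−1,1] with t ≠ 0, t ≠ −1, the closed convex cone in ℝ⁵ generated by the vectors (1, a²(1+t²), a⁴t², a(1+t), a³t(1+t)) for a ∈ ℝ equals the set of (x₁,...,x₅) ∈ ℝ⁵ such that the 3×3 symmetric matrix [[x₁, x₄/(1+t), x₂/(1+t²)], [x₄/(1+t), x₂/(1+t²), x₅/(t(1+t))], [x₂/(1+t²), x₅/(t(1+t)), x₃/t²]] is positive semidefinite. -/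
open Finset Filter Topology Matrix

namespace ConeCtAux



def Hk (m : Fin 5 → ℝ) : Matrix (Fin 3) (Fin 3) ℝ :=
  !![m 0, m 1, m 2; m 1, m 2, m 3; m 2, m 3, m 4]

def Q (m : Fin 5 → ℝ) (z : Fin 3 → ℝ) : ℝ :=
  m 0 * z 0 ^ 2 + m 2 * z 1 ^ 2 + m 4 * z 2 ^ 2
    + 2 * m 1 * (z 0 * z 1) + 2 * m 2 * (z 0 * z 2) + 2 * m 3 * (z 1 * z 2)

lemma hk_posSemidef_iff (m : Fin 5 → ℝ) :
    (Hk m).PosSemidef ↔ ∀ z : Fin 3 → ℝ, 0 ≤ Q m z := by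
  have hherm : (Hk m).IsHermitian := by
    show (Hk m)ᴴ = Hk m
    ext i j
    fin_cases i <;> fin_cases j <;> simp [Hk]
  have hquad : ∀ z : Fin 3 → ℝ, dotProduct (star z) (Hk m *ᵥ z) = Q m z := by
    intro z
    simp [Hk, dotProduct, Matrix.mulVec, Fin.sum_univ_three, Q, Matrix.vecHead, Matrix.vecTail]
    ring
  constructor
  · intro h z
    have := (Matrix.posSemidef_iff_dotProduct_mulVec.mp h).2 z
    rwa [hquad] at this
  · intro h
    exact Matrix.posSemidef_iff_dotProduct_mulVec.mpr ⟨hherm, fun z => by rw [hquad]; exact h z⟩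




def vgen (t a : ℝ) : Fin 5 → ℝ :=
  ![1, a^2 * (1 + t^2), a^4 * t^2, a * (1 + t), a^3 * t * (1 + t)]

def S (t : ℝ) : Set (Fin 5 → ℝ) :=
  {v | ∃ (n : ℕ) (c : Fin n → ℝ) (a : Fin n → ℝ),
    (∀ i, 0 ≤ c i) ∧
    v = ∑ i, c i •
      ![1, (a i)^2 * (1 + t^2), (a i)^4 * t^2, a i * (1 + t), (a i)^3 * t * (1 + t)]}

noncomputable def mvec (t : ℝ) (x : Fin 5 → ℝ) : Fin 5 → ℝ :=
  ![x 0, x 3 / (1 + t), x 1 / (1 + t^2), x 4 / (t * (1 + t)), x 2 / t^2]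

noncomputable def Xv (t : ℝ) (m : Fin 5 → ℝ) : Fin 5 → ℝ :=
  ![m 0, m 2 * (1 + t^2), m 4 * t^2, m 1 * (1 + t), m 3 * t * (1 + t)]

@[simp] lemma mvec0 (t : ℝ) (x : Fin 5 → ℝ) : mvec t x 0 = x 0 := rfl
@[simp] lemma mvec1 (t : ℝ) (x : Fin 5 → ℝ) : mvec t x 1 = x 3 / (1 + t) := rfl
@[simp] lemma mvec2 (t : ℝ) (x : Fin 5 → ℝ) : mvec t x 2 = x 1 / (1 + t^2) := rfl
@[simp] lemma mvec3 (t : ℝ) (x : Fin 5 → ℝ) : mvec t x 3 = x 4 / (t * (1 + t)) := rfl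
@[simp] lemma mvec4 (t : ℝ) (x : Fin 5 → ℝ) : mvec t x 4 = x 2 / t^2 := rfl

@[simp] lemma vgen0 (t a : ℝ) : vgen t a 0 = 1 := rfl
@[simp] lemma vgen1 (t a : ℝ) : vgen t a 1 = a^2 * (1 + t^2) := rfl
@[simp] lemma vgen2 (t a : ℝ) : vgen t a 2 = a^4 * t^2 := rfl
@[simp] lemma vgen3 (t a : ℝ) : vgen t a 3 = a * (1 + t) := rfl
@[simp] lemma vgen4 (t a : ℝ) : vgen t a 4 = a^3 * t * (1 + t) := rfl

@[simp] lemma Xv0 (t : ℝ) (m : Fin 5 → ℝ) : Xv t m 0 = m 0 := rfl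
@[simp] lemma Xv1 (t : ℝ) (m : Fin 5 → ℝ) : Xv t m 1 = m 2 * (1 + t^2) := rfl
@[simp] lemma Xv2 (t : ℝ) (m : Fin 5 → ℝ) : Xv t m 2 = m 4 * t^2 := rfl
@[simp] lemma Xv3 (t : ℝ) (m : Fin 5 → ℝ) : Xv t m 3 = m 1 * (1 + t) := rfl
@[simp] lemma Xv4 (t : ℝ) (m : Fin 5 → ℝ) : Xv t m 4 = m 3 * t * (1 + t) := rfl

lemma mem3 (t : ℝ) {c1 c2 c3 : ℝ} (a1 a2 a3 : ℝ) (h1 : 0 ≤ c1) (h2 : 0 ≤ c2) (h3 : 0 ≤ c3) :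
    c1 • vgen t a1 + c2 • vgen t a2 + c3 • vgen t a3 ∈ S t := by
  refine ⟨3, ![c1, c2, c3], ![a1, a2, a3], ?_, ?_⟩
  · intro i; fin_cases i <;> assumption
  · simp [Fin.sum_univ_three, vgen]


lemma S_subset (t : ℝ) (ht0 : t ≠ 0) (ht1 : (1:ℝ) + t ≠ 0) :
    S t ⊆ {x | ∀ z, 0 ≤ Q (mvec t x) z} := by
  rintro x ⟨n, c, a, hc, rfl⟩
  intro z
  have ht2 : (1:ℝ) + t^2 ≠ 0 := by positivity
  have htt : t * (1 + t) ≠ 0 := mul_ne_zero ht0 ht1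
  have hT2 : (t:ℝ)^2 ≠ 0 := pow_ne_zero _ ht0
  set x : Fin 5 → ℝ := ∑ i, c i •
      ![1, (a i)^2 * (1 + t^2), (a i)^4 * t^2, a i * (1 + t), (a i)^3 * t * (1 + t)] with hx
  have happ : ∀ j : Fin 5, x j = ∑ i, c i * vgen t (a i) j := by
    intro j
    rw [hx]
    simp only [Finset.sum_apply, Pi.smul_apply, smul_eq_mul, vgen]
  have hm0 : mvec t x 0 = ∑ i, c i := by
    rw [mvec0, happ 0]; simp
  have hm1 : mvec t x 1 = ∑ i, c i * a i := by
    rw [mvec1, happ 3, Finset.sum_div]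
    refine Finset.sum_congr rfl fun i _ => ?_
    rw [vgen3]; field_simp
  have hm2 : mvec t x 2 = ∑ i, c i * (a i)^2 := by
    rw [mvec2, happ 1, Finset.sum_div]
    refine Finset.sum_congr rfl fun i _ => ?_
    rw [vgen1]; field_simp
  have hm3 : mvec t x 3 = ∑ i, c i * (a i)^3 := by
    rw [mvec3, happ 4, Finset.sum_div]
    refine Finset.sum_congr rfl fun i _ => ?_
    rw [vgen4]; field_simp
  have hm4 : mvec t x 4 = ∑ i, c i * (a i)^4 := by
    rw [mvec4, happ 2, Finset.sum_div]
    refine Finset.sum_congr rfl fun i _ => ?_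
    rw [vgen2]; field_simp
  have : Q (mvec t x) z = ∑ i, c i * (z 0 + a i * z 1 + (a i)^2 * z 2)^2 := by
    rw [Q, hm0, hm1, hm2, hm3, hm4]
    simp only [Finset.sum_mul, Finset.mul_sum, ← Finset.sum_add_distrib]
    refine Finset.sum_congr rfl fun i _ => ?_
    ring
  rw [this]
  exact Finset.sum_nonneg fun i _ => mul_nonneg (hc i) (sq_nonneg _)

lemma T_closed (t : ℝ) : IsClosed {x : Fin 5 → ℝ | ∀ z, 0 ≤ Q (mvec t x) z} := by
  have : {x : Fin 5 → ℝ | ∀ z, 0 ≤ Q (mvec t x) z}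
      = ⋂ z : Fin 3 → ℝ, {x | 0 ≤ Q (mvec t x) z} := by
    ext x; simp [Set.mem_iInter]
  rw [this]
  refine isClosed_iInter fun z => isClosed_le continuous_const ?_
  simp only [Q, mvec0, mvec1, mvec2, mvec3, mvec4]
  fun_prop

lemma hkey : ∀ (cc : ℝ) (k : ℕ), k ≠ 0 →
    Tendsto (fun n : ℕ => cc / ((n : ℝ) + 1) ^ k) atTop (𝓝 0) := by
  intro cc k hk
  apply Tendsto.div_atTop tendsto_const_nhds
  exact (tendsto_pow_atTop hk).comp (tendsto_atTop_add_const_right _ _ tendsto_natCast_atTop_atTop)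

lemma mainlem (t : ℝ) (μ : Fin 5 → ℝ)
    (hQ : ∀ z, 0 ≤ Q μ z) (h0 : 0 < μ 0) (hD : 0 < μ 0 * μ 2 - μ 1 ^ 2) :
    Xv t μ ∈ closure (S t) := by
  have hDne : μ 0 * μ 2 - μ 1 ^ 2 ≠ 0 := ne_of_gt hD
  obtain ⟨p, hp⟩ : ∃ x : ℝ, x = (μ 0 * μ 3 - μ 1 * μ 2) / (μ 0 * μ 2 - μ 1 ^ 2) := ⟨_, rfl⟩
  obtain ⟨q, hq⟩ : ∃ x : ℝ, x = (μ 2 ^ 2 - μ 1 * μ 3) / (μ 0 * μ 2 - μ 1 ^ 2) := ⟨_, rfl⟩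
  have hpq0 : q * μ 0 + p * μ 1 = μ 2 := by
    rw [hp, hq, div_mul_eq_mul_div, div_mul_eq_mul_div, ← add_div, div_eq_iff hDne]; ring
  have hpq1 : q * μ 1 + p * μ 2 = μ 3 := by
    rw [hp, hq, div_mul_eq_mul_div, div_mul_eq_mul_div, ← add_div, div_eq_iff hDne]; ring
  have hdisc : 0 < p ^ 2 + 4 * q := by
    have key : 4 * μ 0 ^ 2 * (μ 0 * μ 2 - μ 1 ^ 2) ^ 2 * (p ^ 2 + 4 * q)
        = (2 * μ 0 ^ 2 * μ 3 - 2 * μ 0 * μ 1 * μ 2 - 4 * (μ 0 * μ 2 - μ 1 ^ 2) * μ 1) ^ 2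
          + 16 * (μ 0 * μ 2 - μ 1 ^ 2) ^ 3 := by
      rw [hp, hq]; field_simp; ring
    have hC : 0 < 4 * μ 0 ^ 2 * (μ 0 * μ 2 - μ 1 ^ 2) ^ 2 := by positivity
    nlinarith [key, hC, pow_pos hD 3,
      sq_nonneg (2 * μ 0 ^ 2 * μ 3 - 2 * μ 0 * μ 1 * μ 2 - 4 * (μ 0 * μ 2 - μ 1 ^ 2) * μ 1)]
  obtain ⟨s, hs⟩ : ∃ x : ℝ, x = Real.sqrt (p ^ 2 + 4 * q) := ⟨_, rfl⟩
  have hspos : 0 < s := hs ▸ Real.sqrt_pos.mpr hdisc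
  have hsne : s ≠ 0 := ne_of_gt hspos
  have hs2 : s ^ 2 = p ^ 2 + 4 * q := by rw [hs]; exact Real.sq_sqrt hdisc.le
  obtain ⟨a1, ha1⟩ : ∃ x : ℝ, x = (p + s) / 2 := ⟨_, rfl⟩
  obtain ⟨a2, ha2⟩ : ∃ x : ℝ, x = (p - s) / 2 := ⟨_, rfl⟩
  have hsum : a1 + a2 = p := by rw [ha1, ha2]; ring
  have hdiff : a1 - a2 = s := by rw [ha1, ha2]; ring
  have hprod : a1 * a2 = -q := by rw [ha1, ha2]; linear_combination (-(1:ℝ)/4) * hs2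
  have ra1 : a1 ^ 2 = p * a1 + q := by linear_combination a1 * hsum - hprod
  have ra2 : a2 ^ 2 = p * a2 + q := by linear_combination a2 * hsum - hprod
  obtain ⟨c1, hc1⟩ : ∃ x : ℝ, x = (μ 1 - a2 * μ 0) / s := ⟨_, rfl⟩
  obtain ⟨c2, hc2⟩ : ∃ x : ℝ, x = (a1 * μ 0 - μ 1) / s := ⟨_, rfl⟩
  have hc1s : c1 * s = μ 1 - a2 * μ 0 := by rw [hc1]; field_simp
  have hc2s : c2 * s = a1 * μ 0 - μ 1 := by rw [hc2]; field_simp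
  have e0 : c1 + c2 = μ 0 := by
    have h : (c1 + c2) * s = μ 0 * s := by
      rw [add_mul, hc1s, hc2s]; linear_combination μ 0 * hdiff
    exact mul_right_cancel₀ hsne h
  have e1 : c1 * a1 + c2 * a2 = μ 1 := by
    have h : (c1 * a1 + c2 * a2) * s = μ 1 * s := by
      rw [add_mul, mul_right_comm c1 a1 s, mul_right_comm c2 a2 s, hc1s, hc2s]
      linear_combination μ 1 * hdiff
    exact mul_right_cancel₀ hsne h
  have e2 : c1 * a1 ^ 2 + c2 * a2 ^ 2 = μ 2 := by
    linear_combination c1 * ra1 + c2 * ra2 + p * e1 + q * e0 + hpq0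
  have e3 : c1 * a1 ^ 3 + c2 * a2 ^ 3 = μ 3 := by
    linear_combination c1 * a1 * ra1 + c2 * a2 * ra2 + p * e2 + q * e1 + hpq1
  have e4 : c1 * a1 ^ 4 + c2 * a2 ^ 4 = p * μ 3 + q * μ 2 := by
    linear_combination c1 * a1 ^ 2 * ra1 + c2 * a2 ^ 2 * ra2 + p * e3 + q * e2
  obtain ⟨r, hrdef⟩ : ∃ x : ℝ, x = μ 4 - p * μ 3 - q * μ 2 := ⟨_, rfl⟩
  have hr : 0 ≤ r := by
    have h := hQ ![q, p, -1]
    have heq : Q μ ![q, p, -1] = r := by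
      simp only [Q, Matrix.cons_val_zero, Matrix.cons_val_one, Matrix.head_cons,
        Matrix.cons_val_two, Matrix.tail_cons]
      rw [hrdef]; linear_combination q * hpq0 + p * hpq1
    rwa [heq] at h
  have hccs : c1 * c2 * s ^ 2 = μ 0 * μ 2 - μ 1 ^ 2 := by
    have h : c1 * c2 * s ^ 2 = (c1 * s) * (c2 * s) := by ring
    rw [h, hc1s, hc2s]
    linear_combination μ 0 * μ 1 * hsum - μ 0 ^ 2 * hprod + μ 0 * hpq0
  have hccpos : 0 < c1 * c2 := by
    have hs2pos : 0 < s ^ 2 := pow_pos hspos 2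
    have heq : c1 * c2 = (μ 0 * μ 2 - μ 1 ^ 2) / s ^ 2 := (eq_div_iff hs2pos.ne').mpr hccs
    rw [heq]; exact div_pos hD hs2pos
  have hc2pos : 0 < c2 := by
    by_contra hcon
    push_neg at hcon
    have h1 : 0 < c1 := by linarith [e0, h0]
    linarith [mul_nonpos_of_nonneg_of_nonpos h1.le hcon, hccpos]
  have hc1pos : 0 < c1 := by
    by_contra hcon
    push_neg at hcon
    linarith [mul_nonpos_of_nonpos_of_nonneg hcon hc2pos.le, hccpos]
  -- the approximating sequence
  have hbne : ∀ n : ℕ, ((n : ℝ) + 1) ≠ 0 := fun n => by positivity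
  have h3 : Tendsto (fun n : ℕ => (r / ((n:ℝ)+1)^4) • vgen t ((n:ℝ)+1)) atTop
      (𝓝 (![0, 0, r * t^2, 0, 0])) := by
    rw [tendsto_pi_nhds]
    intro j
    fin_cases j <;>
      simp only [Fin.zero_eta, Fin.mk_one, Fin.isValue, show (⟨2, by norm_num⟩ : Fin 5) = 2 from rfl,
        show (⟨3, by norm_num⟩ : Fin 5) = 3 from rfl, show (⟨4, by norm_num⟩ : Fin 5) = 4 from rfl,
        Pi.smul_apply, smul_eq_mul, vgen, Matrix.cons_val_zero, Matrix.cons_val_one,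
        Matrix.head_cons, Matrix.cons_val_two, Matrix.tail_cons, Matrix.cons_val_three,
        Matrix.cons_val_four, mul_one]
    · exact hkey r 4 (by norm_num)
    · exact (hkey (r * (1 + t^2)) 2 (by norm_num)).congr
        (fun n => by have := hbne n; field_simp)
    · exact tendsto_const_nhds.congr
        (fun n => by have := hbne n; field_simp)
    · exact (hkey (r * (1 + t)) 3 (by norm_num)).congr
        (fun n => by have := hbne n; field_simp)
    · exact (hkey (r * (t * (1 + t))) 1 (by norm_num)).congr
        (fun n => by have := hbne n; field_simp)
  have hwt : Tendsto (fun n : ℕ => c1 • vgen t a1 + c2 • vgen t a2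
      + (r / ((n:ℝ)+1)^4) • vgen t ((n:ℝ)+1)) atTop (𝓝 (Xv t μ)) := by
    have hlim : (c1 • vgen t a1 + c2 • vgen t a2) + ![0, 0, r * t^2, 0, 0] = Xv t μ := by
      funext j
      fin_cases j
      · simp [vgen, Xv]; linarith [e0]
      · simp [vgen, Xv]; linear_combination (1 + t^2) * e2
      · simp [vgen, Xv]; linear_combination t^2 * e4 + t^2 * hrdef
      · simp [vgen, Xv]; linear_combination (1 + t) * e1
      · simp [vgen, Xv]; linear_combination t * (1 + t) * e3
    have := (tendsto_const_nhds (x := c1 • vgen t a1 + c2 • vgen t a2)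
      (f := atTop (α := ℕ))).add h3
    rwa [hlim] at this
  refine mem_closure_of_tendsto hwt (Filter.Eventually.of_forall fun n => ?_)
  exact mem3 t _ _ _ hc1pos.le hc2pos.le (by positivity)


def nuv : Fin 5 → ℝ := ![3, 0, 2, 0, 2]

lemma Qnu_lb (z : Fin 3 → ℝ) : z 0 ^ 2 + 2 * z 1 ^ 2 ≤ Q nuv z := by
  simp only [Q, nuv, Matrix.cons_val_zero, Matrix.cons_val_one, Matrix.head_cons,
    Matrix.cons_val_two, Matrix.tail_cons, Matrix.cons_val_three, Matrix.cons_val_four]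
  nlinarith [sq_nonneg (z 0 + z 2)]

lemma Q_add_smul (m ν : Fin 5 → ℝ) (c : ℝ) (z : Fin 3 → ℝ) :
    Q (fun k => m k + c * ν k) z = Q m z + c * Q ν z := by
  simp only [Q]; ring

lemma Xv_add_smul (t : ℝ) (m ν : Fin 5 → ℝ) (c : ℝ) :
    Xv t (fun k => m k + c * ν k) = Xv t m + c • Xv t ν := by
  funext j
  fin_cases j <;> simp [Xv] <;> ring

lemma Xv_mvec (t : ℝ) (ht0 : t ≠ 0) (ht1 : (1:ℝ) + t ≠ 0) (x : Fin 5 → ℝ) :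
    Xv t (mvec t x) = x := by
  have ht2 : (1:ℝ) + t^2 ≠ 0 := by positivity
  funext j
  fin_cases j
  · rfl
  · show x 1 / (1 + t^2) * (1 + t^2) = x 1; field_simp
  · show x 2 / t^2 * t^2 = x 2; field_simp
  · show x 3 / (1 + t) * (1 + t) = x 3; field_simp
  · show x 4 / (t * (1 + t)) * t * (1 + t) = x 4; field_simp

end ConeCtAux

/-- The closed convex cone `C_t ⊂ ℝ⁵` generated by the vectors
`(1, a²(1+t²), a⁴t², a(1+t), a³t(1+t))` for `a ∈ ℝ`. -/
def coneCt (t : ℝ) : Set (Fin 5 → ℝ) :=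
  closure {v | ∃ (n : ℕ) (c : Fin n → ℝ) (a : Fin n → ℝ),
    (∀ i, 0 ≤ c i) ∧
    v = ∑ i, c i •
      ![1, (a i)^2 * (1 + t^2), (a i)^4 * t^2, a i * (1 + t), (a i)^3 * t * (1 + t)]}

open ConeCtAux

theorem coneCt_eq_posSemidef (t : ℝ) (ht : |t| ≤ 1) (ht0 : t ≠ 0) (ht1 : t ≠ -1) :
    coneCt t = {x : Fin 5 → ℝ |
      (!![x 0, x 3 / (1 + t), x 1 / (1 + t^2);
          x 3 / (1 + t), x 1 / (1 + t^2), x 4 / (t * (1 + t));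
          x 1 / (1 + t^2), x 4 / (t * (1 + t)), x 2 / t^2] :
        Matrix (Fin 3) (Fin 3) ℝ).PosSemidef} := by
  have ht1' : (1:ℝ) + t ≠ 0 := fun h => ht1 (by linarith)
  have hHk : ∀ x : Fin 5 → ℝ,
      (!![x 0, x 3 / (1 + t), x 1 / (1 + t^2);
          x 3 / (1 + t), x 1 / (1 + t^2), x 4 / (t * (1 + t));
          x 1 / (1 + t^2), x 4 / (t * (1 + t)), x 2 / t^2] :
        Matrix (Fin 3) (Fin 3) ℝ) = Hk (mvec t x) := fun x => rfl
  have hsetT : {x : Fin 5 → ℝ |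
      (!![x 0, x 3 / (1 + t), x 1 / (1 + t^2);
          x 3 / (1 + t), x 1 / (1 + t^2), x 4 / (t * (1 + t));
          x 1 / (1 + t^2), x 4 / (t * (1 + t)), x 2 / t^2] :
        Matrix (Fin 3) (Fin 3) ℝ).PosSemidef}
      = {x : Fin 5 → ℝ | ∀ z, 0 ≤ Q (mvec t x) z} := by
    ext x
    rw [Set.mem_setOf_eq, Set.mem_setOf_eq, hHk x, hk_posSemidef_iff]
  show closure (S t) = _
  rw [hsetT]
  apply Set.Subset.antisymm
  · exact closure_minimal (S_subset t ht0 ht1') (T_closed t)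
  · intro x hx
    rw [Set.mem_setOf_eq] at hx
    have hx0 : 0 ≤ mvec t x 0 := by
      have h := hx ![1, 0, 0]
      simpa [Q] using h
    -- perturbed moment vectors
    have hmem : ∀ n : ℕ,
        Xv t (fun k => mvec t x k + (1/((n:ℝ)+1)) * nuv k) ∈ closure (S t) := by
      intro n
      have hcpos : (0:ℝ) < 1/((n:ℝ)+1) := by positivity
      set c : ℝ := 1/((n:ℝ)+1) with hc
      have hQn : ∀ z, 0 ≤ Q (fun k => mvec t x k + c * nuv k) z := by
        intro z
        rw [Q_add_smul]
        have h1 := hx z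
        have h2 := Qnu_lb z
        nlinarith [sq_nonneg (z 0), sq_nonneg (z 1)]
      have h0n : 0 < mvec t x 0 + c * nuv 0 := by
        have : nuv 0 = 3 := rfl
        rw [this]; linarith
      have hDn : 0 < (mvec t x 0 + c * nuv 0) * (mvec t x 2 + c * nuv 2)
          - (mvec t x 1 + c * nuv 1) ^ 2 := by
        set μ0 : ℝ := mvec t x 0 + c * nuv 0
        set μ1 : ℝ := mvec t x 1 + c * nuv 1
        set μ2 : ℝ := mvec t x 2 + c * nuv 2
        have hz := hx ![μ1, -μ0, 0]
        have hlb := Qnu_lb ![μ1, -μ0, 0]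
        have hdecomp := Q_add_smul (mvec t x) nuv c ![μ1, -μ0, 0]
        have hform : Q (fun k => mvec t x k + c * nuv k) ![μ1, -μ0, 0]
            = μ0 * (μ0 * μ2 - μ1 ^ 2) := by
          simp only [Q, Matrix.cons_val_zero, Matrix.cons_val_one, Matrix.head_cons,
            Matrix.cons_val_two, Matrix.tail_cons]
          ring
        have hcons0 : (![μ1, -μ0, 0] : Fin 3 → ℝ) 0 = μ1 := rfl
        have hcons1 : (![μ1, -μ0, 0] : Fin 3 → ℝ) 1 = -μ0 := rfl
        rw [hcons0, hcons1] at hlb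
        have hmul : 0 < μ0 * (μ0 * μ2 - μ1 ^ 2) := by
          rw [← hform, hdecomp]
          nlinarith [hz, mul_le_mul_of_nonneg_left hlb hcpos.le,
            mul_pos hcpos (mul_pos h0n h0n), mul_nonneg hcpos.le (sq_nonneg μ1)]
        by_contra hcon
        push_neg at hcon
        nlinarith [mul_nonpos_of_nonneg_of_nonpos h0n.le hcon, hmul]
      exact mainlem t _ hQn h0n hDn
    have htend : Tendsto (fun n : ℕ =>
        Xv t (fun k => mvec t x k + (1/((n:ℝ)+1)) * nuv k)) atTop (𝓝 x) := by
      have heq : ∀ n : ℕ, Xv t (fun k => mvec t x k + (1/((n:ℝ)+1)) * nuv k)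
          = x + (1/((n:ℝ)+1)) • Xv t nuv := by
        intro n
        rw [Xv_add_smul, Xv_mvec t ht0 ht1']
      have h1 : Tendsto (fun n : ℕ => (1/((n:ℝ)+1)) • Xv t nuv) atTop
          (𝓝 ((0:ℝ) • Xv t nuv)) :=
        tendsto_one_div_add_atTop_nhds_zero_nat.smul_const _
      have h2 := (tendsto_const_nhds (x := x) (f := atTop (α := ℕ))).add h1
      rw [zero_smul, add_zero] at h2
      exact h2.congr fun n => (heq n).symm
    exact isClosed_closure.mem_of_tendsto htend (Filter.Eventually.of_forall hmem)
end
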